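/- Let 𝔞 ⊆ ℂ be an R-submodule of ℂ (an additive subgroup satisfying R·𝔞 ⊆ 𝔞). Then 𝔞 ⊆ R (i.e. 𝔞 is an integral ideal of R) if and only if every element a ∈ 𝔞 has imaginary part lying in α_R·ℤ, i.e. for every a ∈ 𝔞 there is n ∈ ℤ with Im(a) = n·α_R. -/
import Mathlib


open NumberField Polynomial

/-- Let `K` be an imaginary quadratic field, `τ : K →+* ℂ` an embedding,
`R = τ(𝓞 K)`, `ω` a generator of `𝓞 K` over `ℤ` with `Im τ(ω) > 0`, and `α_R = Im τ(ω)`.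
If `A` is an `R`-submodule of `ℂ`, then `A ⊆ R` iff every element of `A` has imaginary part
in `α_R · ℤ`. -/
theorem stmt_0
    (K : Type*) [Field K] [NumberField K]
    (hdeg : Module.finrank ℚ K = 2)
    (hcplx : IsEmpty (K →+* ℝ))
    (τ : K →+* ℂ)
    (R : Set ℂ) (hR : R = Set.range fun a : 𝓞 K => τ (algebraMap (𝓞 K) K a))
    (ω : 𝓞 K) (hω : Algebra.adjoin ℤ ({ω} : Set (𝓞 K)) = ⊤)
    (αR : ℝ) (hα : αR = (τ (algebraMap (𝓞 K) K ω)).im) (hαpos : 0 < αR)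
    (A : AddSubgroup ℂ)
    (hmod : ∀ r ∈ R, ∀ a ∈ A, r * a ∈ A) :
    (A : Set ℂ) ⊆ R ↔ ∀ a ∈ A, ∃ n : ℤ, a.im = n * αR := by
  set ζ : K := algebraMap (𝓞 K) K ω with hζ
  set z : ℂ := τ ζ with hz
  have hzim : z.im = αR := hα.symm
  have hzim0 : z.im ≠ 0 := by rw [hzim]; exact ne_of_gt hαpos
  -- minimal polynomial of ζ over ℤ
  have hζint : IsIntegral ℤ ζ := RingOfIntegers.isIntegral_coe ω
  set p : ℤ[X] := minpoly ℤ ζ with hp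
  have hpz : aeval z p = 0 := by
    have h := Polynomial.aeval_algHom_apply τ.toIntAlgHom ζ p
    rw [minpoly.aeval] at h
    exact h.trans (map_zero _)
  have hdegle : p.natDegree ≤ 2 := by
    have h1 : (minpoly ℚ ζ).natDegree ≤ 2 := hdeg ▸ minpoly.natDegree_le ζ
    have h2 : minpoly ℚ ζ = map (algebraMap ℤ ℚ) p :=
      minpoly.isIntegrallyClosed_eq_field_fractions' ℚ hζint
    rwa [h2, Polynomial.natDegree_map_eq_of_injective
      (algebraMap ℤ ℚ).injective_int] at h1
  have hdegpos : 0 < p.natDegree := minpoly.natDegree_pos hζint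
  have hmonic : p.Monic := minpoly.monic hζint
  have hdeg2 : p.natDegree = 2 := by
    rcases Nat.lt_or_ge p.natDegree 2 with h | h
    · exfalso
      have h1 : p.natDegree = 1 := by omega
      -- then z is an integer, so z.im = 0
      have : aeval z p = (p.coeff 0 : ℂ) + z := by
        rw [aeval_eq_sum_range, h1]
        have : p.coeff 1 = 1 := by
          have := hmonic.leadingCoeff
          rwa [Polynomial.leadingCoeff, h1] at this
        simp [Finset.sum_range_succ, this]
      rw [this] at hpz
      have : z = -(p.coeff 0 : ℂ) := by linear_combination hpz
      apply hzim0
      rw [this]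
      simp
    · omega
  set c0 : ℤ := p.coeff 0 with hc0
  set c1 : ℤ := p.coeff 1 with hc1
  have hzsq : z ^ 2 = -(c0 : ℂ) - c1 * z := by
    have h2 : p.coeff 2 = 1 := by
      have := hmonic.leadingCoeff
      rwa [Polynomial.leadingCoeff, hdeg2] at this
    have : aeval z p = (c0 : ℂ) + c1 * z + z ^ 2 := by
      rw [aeval_eq_sum_range, hdeg2]
      simp [Finset.sum_range_succ, h2, hc0, hc1]
      try ring
    rw [this] at hpz
    linear_combination hpz
  -- 2 * z.re = -c1
  have hre : 2 * z.re = -(c1 : ℝ) := by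
    have := congrArg Complex.im hzsq
    simp [pow_two, Complex.mul_im, Complex.add_im, Complex.sub_im] at this
    have h : (z.re * 2 + c1) * z.im = 0 := by ring_nf; linarith [this]
    rcases mul_eq_zero.mp h with h' | h'
    · linarith
    · exact absurd h' hzim0
  -- representation lemma : every element of R is m + n*z
  have rep : ∀ x : 𝓞 K, ∃ m n : ℤ, τ (algebraMap (𝓞 K) K x) = m + n * z := by
    intro x
    have hx : x ∈ Algebra.adjoin ℤ ({ω} : Set (𝓞 K)) := hω ▸ Algebra.mem_top
    rw [Algebra.adjoin_singleton_eq_range_aeval] at hx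
    obtain ⟨P, hP⟩ := hx
    have hPx : τ (algebraMap (𝓞 K) K x) = aeval z P := by
      rw [← hP]
      exact (Polynomial.aeval_algHom_apply
        (τ.toIntAlgHom.comp (IsScalarTower.toAlgHom ℤ (𝓞 K) K)) ω P).symm
    rw [hPx]
    clear hPx hP x
    induction P using Polynomial.induction_on with
    | C a => exact ⟨a, 0, by simp⟩
    | add P Q hPi hQi =>
        obtain ⟨m, n, hm⟩ := hPi
        obtain ⟨m', n', hm'⟩ := hQi
        exact ⟨m + m', n + n', by push_cast; rw [map_add, hm, hm']; ring⟩
    | monomial k a hk =>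
        obtain ⟨m, n, hm⟩ := hk
        refine ⟨-n * c0, m - n * c1, ?_⟩
        have : (aeval z) (C a * X ^ (k + 1)) = (aeval z) (C a * X ^ k) * z := by
          simp [pow_succ]; ring
        rw [this, hm]
        push_cast
        linear_combination (n : ℂ) * hzsq + z * hm - z * hm
  constructor
  · intro hsub a ha
    obtain ⟨x, hx⟩ := hR ▸ hsub ha
    have hx' : τ (algebraMap (𝓞 K) K x) = a := hx
    obtain ⟨m, n, hm⟩ := rep x
    refine ⟨n, ?_⟩
    rw [← hx', hm, ← hzim]
    simp
  · intro h a ha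
    obtain ⟨n, hn⟩ := h a ha
    have hzR : z ∈ R := by rw [hR]; exact ⟨ω, rfl⟩
    have hza : z * a ∈ A := hmod z hzR a ha
    obtain ⟨m, hm⟩ := h (z * a) hza
    have hare : a.re = m - n * z.re := by
      have him : (z * a).im = z.re * a.im + z.im * a.re := by
        simp [Complex.mul_im]
      rw [him, hn, ← hzim] at hm
      have : z.im * (z.re * n + a.re) = z.im * m := by ring_nf; ring_nf at hm; linarith
      have := mul_left_cancel₀ hzim0 this
      linarith
    have hRS : R = ((τ.comp (algebraMap (𝓞 K) K)).range : Set ℂ) := by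
      rw [hR, RingHom.coe_range]; rfl
    rw [hRS]
    have ha2 : a = ((m + n * c1 : ℤ) : ℂ) + (n : ℂ) * z := by
      apply Complex.ext
      · simp only [Complex.add_re, Complex.mul_re, Complex.intCast_re, Complex.intCast_im]
        rw [hare]
        push_cast
        linear_combination -(n : ℝ) * hre
      · simp only [Complex.add_im, Complex.mul_im, Complex.intCast_im, Complex.intCast_re]
        rw [hn, ← hzim]; ring
    rw [ha2]
    exact add_mem (intCast_mem _ _) (mul_mem (intCast_mem _ _) ⟨ω, rfl⟩)
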